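/- Let C be a shortest odd hole of graph G, x ∈ M_G(C), and suppose the edges of C are partitioned into x-gaps together with a set of x-complete-incident edges. Since ||C|| is odd and every x-gap is even, there exists at least one edge of C that is not contained in any x-gap; consequently, x has two adjacent neighbors on C, i.e., C[N_G(x) ∩ V(C)] contains at least one edge of C. -/

import Mathlib

open SimpleGraph

variable {V : Type*}

def IsHole (G : SimpleGraph V) {v : V} (C : G.Walk v v) : Prop :=
  C.IsCycle ∧ 4 ≤ C.length ∧
    ∀ x y : V, x ∈ C.support → y ∈ C.support → G.Adj x y → s(x, y) ∈ C.edges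

def IsShortestOddHole (G : SimpleGraph V) {v : V} (C : G.Walk v v) : Prop :=
  IsHole G C ∧ Odd C.length ∧
    ∀ (w : V) (D : G.Walk w w), IsHole G D → Odd D.length → C.length ≤ D.length

/-- `x` is a major vertex for the hole `C`: the neighbors of `x` on `C` are not all
contained in a single path of `C` with two edges. -/
def IsMajor (G : SimpleGraph V) {v : V} (C : G.Walk v v) (x : V) : Prop :=
  ¬ ∃ (a b : V) (Q : G.Walk a b), Q.IsPath ∧ Q.length = 2 ∧
      (∀ e ∈ Q.edges, e ∈ C.edges) ∧
      ∀ y, y ∈ C.support → G.Adj x y → y ∈ Q.support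

section Helpers

open SimpleGraph.Walk

variable {G : SimpleGraph V}

lemma mem_edge_of_mem_support {u v y : V} (p : G.Walk u v) (hp : p.length ≠ 0)
    (hy : y ∈ p.support) : ∃ e ∈ p.edges, y ∈ e := by
  induction p with
  | nil => simp at hp
  | @cons a b c h q ih =>
    rw [support_cons, List.mem_cons] at hy
    rcases hy with rfl | hy
    · exact ⟨s(y, b), by simp, by simp⟩
    · rcases Nat.eq_zero_or_pos q.length with h0 | h0
      · have : b = c := Walk.eq_of_length_eq_zero h0
        subst this
        cases q with
        | nil =>
          simp only [support_nil, List.mem_singleton] at hy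
          exact ⟨s(a, y), by simp [hy], by simp⟩
        | cons h' q' => simp [Walk.length_cons] at h0
      · obtain ⟨e, he, hye⟩ := ih h0.ne' hy
        exact ⟨e, by simp [he], hye⟩

lemma mem_support_of_mem_edge {u v y : V} (p : G.Walk u v) {e : Sym2 V}
    (he : e ∈ p.edges) (hy : y ∈ e) : y ∈ p.support := by
  induction e with
  | _ a b =>
    rw [Sym2.mem_iff] at hy
    rcases hy with rfl | rfl
    · exact p.fst_mem_support_of_mem_edges he
    · exact p.snd_mem_support_of_mem_edges he

lemma mem_support_iff_of_edges_perm {u v u' v' y : V} {p : G.Walk u v} {q : G.Walk u' v'}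
    (hp : p.length ≠ 0) (hq : q.length ≠ 0) (h : List.Perm p.edges q.edges) :
    y ∈ p.support ↔ y ∈ q.support := by
  constructor
  · intro hy
    obtain ⟨e, he, hye⟩ := mem_edge_of_mem_support p hp hy
    exact mem_support_of_mem_edge q (h.mem_iff.mp he) hye
  · intro hy
    obtain ⟨e, he, hye⟩ := mem_edge_of_mem_support q hq hy
    exact mem_support_of_mem_edge p (h.mem_iff.mpr he) hye

lemma isCycle_append_comm {a b : V} {p : G.Walk a b} {q : G.Walk b a}
    (h : (p.append q).IsCycle) : (q.append p).IsCycle := by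
  have hne : (q.append p).length ≠ 0 := by
    have h3 := h.three_le_length
    rw [length_append] at h3 ⊢
    omega
  refine ⟨⟨⟨?_⟩, ?_⟩, ?_⟩
  · have := h.edges_nodup
    rw [edges_append] at this ⊢
    exact (List.perm_append_comm).nodup_iff.mpr this
  · intro hn
    rw [hn] at hne
    simp at hne
  · have := h.support_nodup
    rw [tail_support_append] at this ⊢
    exact (List.perm_append_comm).nodup_iff.mpr this

lemma cycle_two_edges_aux {u : V} {D : G.Walk u u} (hD : D.IsCycle) :
    ∃ y z : V, G.Adj y u ∧ G.Adj u z ∧ y ≠ z ∧ s(y, u) ∈ D.edges ∧ s(u, z) ∈ D.edges ∧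
      ∀ y' : V, s(u, y') ∈ D.edges → y' = y ∨ y' = z := by
  have h3 := hD.three_le_length
  cases D with
  | nil => simp at h3
  | @cons _ z _ h p =>
    have hpnn : ¬ p.reverse.Nil := by
      rw [not_nil_iff_lt_length, length_reverse]
      rw [length_cons] at h3; omega
    obtain ⟨y, h', q, hq⟩ := not_nil_iff.mp hpnn
    have hpe : p.edges = (Walk.cons h' q).edges.reverse := by
      rw [← hq, edges_reverse, List.reverse_reverse]
    have hDe : (Walk.cons h p).edges = s(u, z) :: p.edges := edges_cons _ _
    have hme : s(u, y) ∈ p.edges := by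
      rw [hpe, edges_cons]; simp
    have hnodup := hD.edges_nodup
    rw [hDe, List.nodup_cons] at hnodup
    have hyz : y ≠ z := by
      rintro rfl
      exact hnodup.1 hme
    have hpsup : p.support.Nodup := by
      have := hD.support_nodup
      rwa [support_cons, List.tail_cons] at this
    have huq : u ∉ q.support := by
      have : p.reverse.support.Nodup := by
        rw [support_reverse]; exact List.nodup_reverse.mpr hpsup
      rw [hq, support_cons, List.nodup_cons] at this
      exact this.1
    refine ⟨y, z, h'.symm, h, hyz, by rw [hDe]; right; rw [Sym2.eq_swap]; exact hme,
      by rw [hDe]; left, ?_⟩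
    intro y' hy'
    rw [hDe, List.mem_cons] at hy'
    rcases hy' with he | he
    · right
      rw [Sym2.eq_iff] at he
      rcases he with ⟨-, rfl⟩ | ⟨rfl, rfl⟩ <;> rfl
    · left
      have : s(u, y') ∈ (Walk.cons h' q).edges := by
        rw [hpe, List.mem_reverse] at he; exact he
      rw [edges_cons, List.mem_cons] at this
      rcases this with he2 | he2
      · rw [Sym2.eq_iff] at he2
        rcases he2 with ⟨-, rfl⟩ | ⟨rfl, rfl⟩ <;> rfl
      · exact absurd (q.fst_mem_support_of_mem_edges he2) huq

lemma cycle_two_edges {w u : V} {C : G.Walk w w} (hC : C.IsCycle) (hu : u ∈ C.support) :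
    ∃ y z : V, G.Adj y u ∧ G.Adj u z ∧ y ≠ z ∧ s(y, u) ∈ C.edges ∧ s(u, z) ∈ C.edges ∧
      ∀ y' : V, s(u, y') ∈ C.edges → y' = y ∨ y' = z := by
  classical
  have hr := hC.rotate hu
  have hper : List.Perm (C.rotate u hu).edges C.edges := (C.rotate_edges u hu).perm
  obtain ⟨y, z, h1, h2, h3, h4, h5, h6⟩ := cycle_two_edges_aux hr
  exact ⟨y, z, h1, h2, h3, hper.mem_iff.mp h4, hper.mem_iff.mp h5,
    fun y' hy' => h6 y' (hper.mem_iff.mpr hy')⟩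

lemma main_aux {w x : V} {C : G.Walk w w}
    (hC : IsShortestOddHole G C) (hmaj : IsMajor G C x) (hx : x ∉ C.support)
    (hne : ¬ ∃ a b : V, s(a, b) ∈ C.edges ∧ G.Adj x a ∧ G.Adj x b) :
    ∀ (k : ℕ) {a b : V} (P : G.Walk a b) (Q : G.Walk b a),
      P.length = k → a ≠ b → (P.append Q).IsCycle →
      List.Perm (P.append Q).edges C.edges → G.Adj x a → G.Adj x b →
      Odd P.length → False := by
  classical
  obtain ⟨⟨hCcyc, hC4, hind⟩, hCodd, hmin⟩ := hC
  have hClen0 : C.length ≠ 0 := by omega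
  intro k
  induction k using Nat.strong_induction_on with
  | _ k ih =>
  intro a b P Q hk hab hcyc hper hxa hxb hodd
  have happlen : (P.append Q).length ≠ 0 := by
    have := hcyc.three_le_length; omega
  have hsupiff : ∀ y : V, y ∈ (P.append Q).support ↔ y ∈ C.support :=
    fun y => mem_support_iff_of_edges_perm happlen hClen0 hper
  have hPQlen : P.length + Q.length = C.length := by
    have := hper.length_eq
    rwa [length_edges, length_edges, length_append] at this
  have hQpos : Q.length ≠ 0 := fun h => hab (Walk.eq_of_length_eq_zero h).symm
  have hPpos : P.length ≠ 0 := by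
    rcases hodd with ⟨m, hm⟩; omega
  have haC : a ∈ C.support := (hsupiff a).mp (by simp)
  have hbC : b ∈ C.support := (hsupiff b).mp (by
    rw [mem_support_append_iff]; exact Or.inl (P.end_mem_support))
  have hnadj : ¬ G.Adj a b := fun h => hne ⟨a, b, hind a b haC hbC h, hxa, hxb⟩
  have hP1 : P.length ≠ 1 := by
    intro h1
    cases P with
    | nil => simp at h1
    | @cons _ c _ hadj p =>
      rw [length_cons] at h1
      have hc : c = b := Walk.eq_of_length_eq_zero (p := p) (by omega)
      subst hc
      exact hnadj hadj
  have hP3 : 3 ≤ P.length := by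
    rcases hodd with ⟨m, hm⟩; omega
  by_cases hsplit : ∃ y, y ∈ P.support ∧ G.Adj x y ∧ y ≠ a ∧ y ≠ b
  · obtain ⟨y, hyP, hxy, hya, hyb⟩ := hsplit
    set P1 := P.takeUntil y hyP with hP1def
    set P2 := P.dropUntil y hyP with hP2def
    have hspec : P1.append P2 = P := P.take_spec hyP
    have hlen12 : P1.length + P2.length = P.length := by
      rw [← length_append, hspec]
    have h1pos : P1.length ≠ 0 := fun h => hya (Walk.eq_of_length_eq_zero h).symm
    have h2pos : P2.length ≠ 0 := fun h => hyb (Walk.eq_of_length_eq_zero h)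
    have hcyc1 : (P1.append (P2.append Q)).IsCycle := by
      rw [append_assoc, hspec]; exact hcyc
    have hper1 : List.Perm (P1.append (P2.append Q)).edges C.edges := by
      rw [append_assoc, hspec]; exact hper
    rcases Nat.even_or_odd P1.length with he1 | ho1
    · -- P2 odd
      have ho2 : Odd P2.length := by
        rcases hodd with ⟨m, hm⟩; rcases he1 with ⟨r, hr⟩
        rcases Nat.even_or_odd P2.length with ⟨s, hs⟩ | h'
        · omega
        · exact h'
      have hcyc2 : (P2.append (Q.append P1)).IsCycle := by
        rw [append_assoc]; exact isCycle_append_comm hcyc1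
      have hper2 : List.Perm (P2.append (Q.append P1)).edges C.edges := by
        refine List.Perm.trans ?_ hper1
        simp only [edges_append, ← List.append_assoc]
        refine List.Perm.trans List.perm_append_comm ?_
        rw [List.append_assoc]
      exact ih P2.length (by omega) P2 (Q.append P1) rfl hyb hcyc2 hper2 hxy hxb ho2
    · exact ih P1.length (by omega) P1 (P2.append Q) rfl (Ne.symm hya) hcyc1 hper1 hxa hxy ho1
  · push_neg at hsplit
    have hsplit' : ∀ y, y ∈ P.support → G.Adj x y → y = a ∨ y = b := by
      intro y hy hxy
      by_cases h : y = a
      · exact Or.inl h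
      · exact Or.inr (hsplit y hy hxy h)
    have htail := hcyc.support_nodup
    rw [tail_support_append] at htail
    have hnd := List.nodup_append'.mp htail
    have hdisj : ∀ z, z ∈ P.support.tail → z ∈ Q.support.tail → False := by
      intro z h1 h2; exact hnd.2.2 h1 h2
    have haQt : a ∈ Q.support.tail := end_mem_tail_support_of_ne (Ne.symm hab) Q
    have hbPt : b ∈ P.support.tail := end_mem_tail_support_of_ne hab P
    have hPsup : P.support.Nodup := by
      rw [P.support_eq_cons]
      exact List.nodup_cons.mpr ⟨fun h => hdisj a h haQt, hnd.1⟩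
    have hQsup : Q.support.Nodup := by
      rw [Q.support_eq_cons]
      exact List.nodup_cons.mpr ⟨fun h => hdisj b hbPt h, hnd.2.1⟩
    have hxP : x ∉ P.support := fun h =>
      hx ((hsupiff x).mp (by rw [mem_support_append_iff]; exact Or.inl h))
    have hPedges : P.edges.Nodup := by
      have := hcyc.edges_nodup
      rw [edges_append] at this
      exact (List.nodup_append'.mp this).1
    set D : G.Walk x x := Walk.cons hxa (P.concat hxb.symm) with hDdef
    have hDlen : D.length = P.length + 2 := by
      simp [hDdef, length_concat]
    have hDsupp : D.support = x :: (P.support ++ [x]) := by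
      simp [hDdef, support_concat, List.concat_eq_append]
    have hDedges : D.edges = s(x, a) :: (P.edges ++ [s(b, x)]) := by
      simp [hDdef, edges_concat, List.concat_eq_append]
    have hxaP : s(x, a) ∉ P.edges := fun h => hxP (P.fst_mem_support_of_mem_edges h)
    have hbxP : s(b, x) ∉ P.edges := fun h => hxP (P.snd_mem_support_of_mem_edges h)
    have hxane : s(x, a) ≠ s(b, x) := by
      intro h
      rcases Sym2.eq_iff.mp h with ⟨h1, h2⟩ | ⟨h1, h2⟩
      · exact hxb.ne h1
      · exact hab h2
    have hDcyc : D.IsCycle := by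
      refine ⟨⟨⟨?_⟩, by simp [hDdef]⟩, ?_⟩
      · rw [hDedges]
        refine List.nodup_cons.mpr ⟨?_, ?_⟩
        · rw [List.mem_append]
          rintro (h | h)
          · exact hxaP h
          · simp only [List.mem_singleton] at h; exact hxane h
        · refine List.nodup_append'.mpr ⟨hPedges, List.nodup_singleton _, ?_⟩
          intro e he h'
          simp only [List.mem_singleton] at h'
          subst h'
          exact hbxP he
      · rw [hDsupp]
        simp only [List.tail_cons]
        refine List.nodup_append'.mpr ⟨hPsup, List.nodup_singleton _, ?_⟩
        intro z hz h'
        simp only [List.mem_singleton] at h'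
        subst h'
        exact hxP hz
    have hDsupmem : ∀ u : V, u ∈ D.support ↔ u = x ∨ u ∈ P.support := by
      intro u
      rw [hDsupp]
      simp only [List.mem_cons, List.mem_append, List.mem_singleton]
      tauto
    have hPsubC : ∀ u : V, u ∈ P.support → u ∈ C.support := fun u h =>
      (hsupiff u).mp (by rw [mem_support_append_iff]; exact Or.inl h)
    have hQmemab : ∀ u : V, u ∈ P.support → u ∈ Q.support → u = a ∨ u = b := by
      intro u h1 h2
      rw [P.support_eq_cons, List.mem_cons] at h1
      rw [Q.support_eq_cons, List.mem_cons] at h2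
      rcases h1 with rfl | h1
      · exact Or.inl rfl
      rcases h2 with rfl | h2
      · exact Or.inr rfl
      exact absurd h2 (fun h' => hdisj u h1 h')
    have hhole : IsHole G D := by
      refine ⟨hDcyc, by omega, ?_⟩
      intro u1 u2 hu1 hu2 hadj
      rw [hDsupmem] at hu1 hu2
      rcases hu1 with rfl | hu1
      · rcases hu2 with rfl | hu2
        · exact absurd hadj G.irrefl
        · rcases hsplit' u2 hu2 hadj with rfl | rfl
          · rw [hDedges]; exact List.mem_cons_self
          · rw [hDedges]
            exact List.mem_cons.mpr (Or.inr (List.mem_append.mpr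
              (Or.inr (List.mem_singleton.mpr Sym2.eq_swap))))
      · rcases hu2 with rfl | hu2
        · rcases hsplit' u1 hu1 hadj.symm with rfl | rfl
          · rw [hDedges]; exact List.mem_cons.mpr (Or.inl Sym2.eq_swap)
          · rw [hDedges]
            exact List.mem_cons.mpr (Or.inr (List.mem_append.mpr
              (Or.inr (List.mem_singleton.mpr rfl))))
        · have hadjC : s(u1, u2) ∈ C.edges :=
            hind u1 u2 (hPsubC u1 hu1) (hPsubC u2 hu2) hadj
          have hm : s(u1, u2) ∈ P.edges ∨ s(u1, u2) ∈ Q.edges := by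
            have := hper.mem_iff.mpr hadjC
            rwa [edges_append, List.mem_append] at this
          rcases hm with hm | hm
          · rw [hDedges]
            exact List.mem_cons.mpr (Or.inr (List.mem_append.mpr (Or.inl hm)))
          · have h1 := hQmemab u1 hu1 (Q.fst_mem_support_of_mem_edges hm)
            have h2 := hQmemab u2 hu2 (Q.snd_mem_support_of_mem_edges hm)
            exfalso
            rcases h1 with rfl | rfl <;> rcases h2 with rfl | rfl
            · exact G.irrefl hadj
            · exact hnadj hadj
            · exact hnadj hadj.symm
            · exact G.irrefl hadj
    have hDodd : Odd D.length := by
      rw [hDlen]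
      rcases hodd with ⟨m, hm⟩
      exact ⟨m + 1, by omega⟩
    have hminD := hmin x D hhole hDodd
    have hQ2 : Q.length = 2 := by
      rw [hDlen] at hminD
      have h1 : P.length % 2 = 1 := Nat.odd_iff.mp hodd
      have h2 : C.length % 2 = 1 := Nat.odd_iff.mp hCodd
      omega
    exact hmaj ⟨b, a, Q, IsPath.mk' hQsup, hQ2,
      fun e he => hper.mem_iff.mp (by rw [edges_append, List.mem_append]; exact Or.inr he),
      by
        intro y hy hxy
        have := (hsupiff y).mpr hy
        rw [mem_support_append_iff] at this
        rcases this with h | h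
        · rcases hsplit' y h hxy with rfl | rfl
          · exact Q.end_mem_support
          · exact Q.start_mem_support
        · exact h⟩

end Helpers

open SimpleGraph.Walk in
/-- A major vertex for a shortest odd hole `C` has two adjacent neighbors on `C`:
some edge of `C` has both ends adjacent to `x`. -/
theorem stmt15 (G : SimpleGraph V) {w : V} (C : G.Walk w w)
    (hC : IsShortestOddHole G C) (x : V) (hmaj : IsMajor G C x) :
    ∃ a b : V, s(a, b) ∈ C.edges ∧ G.Adj x a ∧ G.Adj x b := by
  classical
  by_contra hne
  have hCcyc := hC.1.1
  have hC4 := hC.1.2.1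
  have hind := hC.1.2.2
  have hCodd := hC.2.1
  have hClen0 : C.length ≠ 0 := by omega
  have hub : ∀ u : V, u ∈ C.support →
      (∀ y', y' ∈ C.support → G.Adj x y' → y' = u ∨ s(u, y') ∈ C.edges) → False := by
    intro u huC hcov
    obtain ⟨y, z, hyu, huz, hyz, hey, hez, huniq⟩ := cycle_two_edges hCcyc huC
    refine hmaj ⟨y, z, Walk.cons hyu (Walk.cons huz Walk.nil), ?_, by simp, ?_, ?_⟩
    · rw [Walk.isPath_def]
      simp [hyu.ne, huz.ne, hyz]
    · intro e he
      simp only [edges_cons, edges_nil, List.mem_cons, List.not_mem_nil, or_false] at he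
      rcases he with rfl | rfl
      · exact hey
      · exact hez
    · intro y' hy' hxy'
      have hmem : y' = u ∨ y' = y ∨ y' = z := by
        rcases hcov y' hy' hxy' with h | h
        · exact Or.inl h
        · exact Or.inr (huniq y' h)
      simp only [support_cons, support_nil, List.mem_cons, List.not_mem_nil, or_false,
        List.mem_singleton]
      tauto
  by_cases hxs : x ∈ C.support
  · exact hub x hxs (fun y' hy' hxy' => Or.inr (hind x y' hxs hy' hxy'))
  by_cases htwo : ∃ a b : V, a ∈ C.support ∧ b ∈ C.support ∧ G.Adj x a ∧ G.Adj x b ∧ a ≠ b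
  · obtain ⟨a, b, haC, hbC, hxa, hxb, hab⟩ := htwo
    set C' := C.rotate a haC with hC'def
    have hC'cyc : C'.IsCycle := hCcyc.rotate haC
    have hper : List.Perm C'.edges C.edges := (C.rotate_edges a haC).perm
    have hC'len : C'.length = C.length := by
      have := hper.length_eq
      rwa [length_edges, length_edges] at this
    have hC'len0 : C'.length ≠ 0 := by omega
    have hbC' : b ∈ C'.support :=
      (mem_support_iff_of_edges_perm hC'len0 hClen0 hper).mpr hbC
    set P := C'.takeUntil b hbC' with hPdef
    set Q := C'.dropUntil b hbC' with hQdef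
    have hspec : P.append Q = C' := C'.take_spec hbC'
    have hcyc : (P.append Q).IsCycle := by rw [hspec]; exact hC'cyc
    have hperPQ : List.Perm (P.append Q).edges C.edges := by rw [hspec]; exact hper
    have hlen : P.length + Q.length = C.length := by
      rw [← hC'len, ← hspec, length_append]
    rcases Nat.even_or_odd P.length with heP | hoP
    · have hoQ : Odd Q.length := by
        rcases hCodd with ⟨m, hm⟩; rcases heP with ⟨r, hr⟩
        rcases Nat.even_or_odd Q.length with ⟨s', hs⟩ | h'
        · omega
        · exact h'
      have hcycQP : (Q.append P).IsCycle := isCycle_append_comm hcyc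
      have hperQP : List.Perm (Q.append P).edges C.edges := by
        rw [edges_append]
        refine List.Perm.trans List.perm_append_comm ?_
        rw [← edges_append]
        exact hperPQ
      exact main_aux hC hmaj hxs hne Q.length Q P rfl (Ne.symm hab) hcycQP hperQP hxb hxa hoQ
    · exact main_aux hC hmaj hxs hne P.length P Q rfl hab hcyc hperPQ hxa hxb hoP
  · push_neg at htwo
    by_cases hex : ∃ a : V, a ∈ C.support ∧ G.Adj x a
    · obtain ⟨a, haC, hxa⟩ := hex
      exact hub a haC (fun y' hy' hxy' => Or.inl (htwo y' a hy' haC hxy' hxa))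
    · push_neg at hex
      exact hub w C.start_mem_support (fun y' hy' hxy' => absurd hxy' (hex y' hy'))
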